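/- Let B > 0, let q be a probability density on ℝ supported in [−B,B], and let p_T be a probability density on ℝ with ∫_ℝ |x| p_T(x) dx < ∞. Then F(α) = −∫_ℝ p_T(x) log H(α,x) dx tends to 0 as α → 1 from the left. -/

import Mathlib

open MeasureTheory Real Filter
open scoped ENNReal Topology

/-- The correction factor `H(α,x) = ∫ ν, exp(-(1/(2α²))((1-α)² ν² - 2(1-α) x ν)) q(ν) dν`. -/
noncomputable def Hfun (q : ℝ → ℝ) (α x : ℝ) : ℝ :=
  ∫ ν : ℝ, Real.exp (-(1 / (2 * α ^ 2)) * ((1 - α) ^ 2 * ν ^ 2 - 2 * (1 - α) * x * ν)) * q ν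

/-- If `q` is a probability density supported in `[-B,B]` and `p_T` is a probability density
with finite first absolute moment, then `F(α) = -∫ p_T(x) log H(α,x) dx` tends to `0` as
`α → 1` from the left. -/
theorem statement10 (B : ℝ) (hB : 0 < B)
    (q : ℝ → ℝ) (hq_meas : Measurable q) (hq_nonneg : ∀ x, 0 ≤ q x)
    (hq_one : ∫ x, q x = 1) (hq_supp : Function.support q ⊆ Set.Icc (-B) B)
    (pT : ℝ → ℝ) (hpT_meas : Measurable pT) (hpT_nonneg : ∀ x, 0 ≤ pT x)
    (hpT_one : ∫ x, pT x = 1)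
    (hpT_mom : Integrable (fun x => |x| * pT x)) :
    Tendsto (fun α : ℝ => -∫ x : ℝ, pT x * Real.log (Hfun q α x))
      (nhdsWithin 1 (Set.Iio 1)) (nhds 0) := by
  have hq_int : Integrable q := by
    by_contra h
    rw [integral_undef h] at hq_one; norm_num at hq_one
  have hpT_int : Integrable pT := by
    by_contra h
    rw [integral_undef h] at hpT_one; norm_num at hpT_one
  set M := ∫ x, |x| * pT x with hM
  have hM0 : 0 ≤ M := integral_nonneg fun x => mul_nonneg (abs_nonneg x) (hpT_nonneg x)
  set g : ℝ → ℝ := fun α => (1 - α) ^ 2 * B ^ 2 / (2 * α ^ 2) + (1 - α) * B / α ^ 2 * M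
    with hgdef
  have hg_tendsto : Tendsto g (nhdsWithin 1 (Set.Iio 1)) (nhds 0) := by
    have hc : ContinuousAt g 1 := by
      apply ContinuousAt.add
      · exact ContinuousAt.div (by fun_prop) (by fun_prop) (by norm_num)
      · exact ContinuousAt.mul (ContinuousAt.div (by fun_prop) (by fun_prop) (by norm_num))
          continuousAt_const
    have h1 : g 1 = 0 := by simp [hgdef]
    have := hc.tendsto
    rw [h1] at this
    exact this.mono_left nhdsWithin_le_nhds
  apply squeeze_zero_norm' ?_ hg_tendsto
  have hmem : ∀ᶠ α in nhdsWithin (1:ℝ) (Set.Iio 1), α ∈ Set.Ioo (1/2 : ℝ) 1 := by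
    have h1 : ∀ᶠ α in nhdsWithin (1:ℝ) (Set.Iio 1), α ∈ Set.Iio (1:ℝ) :=
      eventually_mem_nhdsWithin
    have h2 : ∀ᶠ α in nhdsWithin (1:ℝ) (Set.Iio 1), (1/2 : ℝ) < α :=
      eventually_nhdsWithin_of_eventually_nhds (eventually_gt_nhds (by norm_num))
    filter_upwards [h1, h2] with α hα1 hα2
    exact ⟨hα2, hα1⟩
  filter_upwards [hmem] with α hα
  obtain ⟨hα2, hα1⟩ := hα
  have hα0 : 0 < α := lt_trans (by norm_num) hα2
  have hαsq : (0:ℝ) < α ^ 2 := by positivity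
  have h1α : 0 ≤ 1 - α := by linarith
  set a : ℝ := (1 - α) ^ 2 * B ^ 2 / (2 * α ^ 2) with hadef
  set b : ℝ := (1 - α) * B / α ^ 2 with hbdef
  have ha0 : 0 ≤ a := by positivity
  have hb0 : 0 ≤ b := by positivity
  -- pointwise bound on log H
  have key : ∀ x : ℝ, |Real.log (Hfun q α x)| ≤ a + b * |x| := by
    intro x
    set E : ℝ → ℝ := fun ν =>
      -(1 / (2 * α ^ 2)) * ((1 - α) ^ 2 * ν ^ 2 - 2 * (1 - α) * x * ν) with hEdef
    have hc0 : 0 ≤ a + b * |x| := by positivity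
    have hEbound : ∀ ν ∈ Set.Icc (-B) B, |E ν| ≤ a + b * |x| := by
      intro ν hν
      have hνB : |ν| ≤ B := abs_le.mpr ⟨hν.1, hν.2⟩
      have hν2 : ν ^ 2 ≤ B ^ 2 := by
        rw [← sq_abs]; exact pow_le_pow_left₀ (abs_nonneg ν) hνB 2
      have h1 : |(1 - α) ^ 2 * ν ^ 2| ≤ (1 - α) ^ 2 * B ^ 2 := by
        rw [abs_of_nonneg (by positivity)]
        exact mul_le_mul_of_nonneg_left hν2 (by positivity)
      have h2 : |2 * (1 - α) * x * ν| ≤ 2 * (1 - α) * |x| * B := by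
        have : |2 * (1 - α) * x * ν| = 2 * (1 - α) * |x| * |ν| := by
          rw [abs_mul, abs_mul, abs_mul]
          rw [abs_of_nonneg (by norm_num : (0:ℝ) ≤ 2), abs_of_nonneg h1α]
        rw [this]
        exact mul_le_mul_of_nonneg_left hνB (by positivity)
      have h3 : |(1 - α) ^ 2 * ν ^ 2 - 2 * (1 - α) * x * ν|
          ≤ (1 - α) ^ 2 * B ^ 2 + 2 * (1 - α) * |x| * B :=
        (abs_sub _ _).trans (add_le_add h1 h2)
      have h4 : |E ν| = 1 / (2 * α ^ 2) * |(1 - α) ^ 2 * ν ^ 2 - 2 * (1 - α) * x * ν| := by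
        rw [hEdef]; rw [abs_mul, abs_neg, abs_of_nonneg (by positivity)]
      rw [h4]
      calc 1 / (2 * α ^ 2) * |(1 - α) ^ 2 * ν ^ 2 - 2 * (1 - α) * x * ν|
          ≤ 1 / (2 * α ^ 2) * ((1 - α) ^ 2 * B ^ 2 + 2 * (1 - α) * |x| * B) :=
            mul_le_mul_of_nonneg_left h3 (by positivity)
        _ = a + b * |x| := by rw [hadef, hbdef]; field_simp
    have hlow : ∀ ν, Real.exp (-(a + b * |x|)) * q ν ≤ Real.exp (E ν) * q ν := by
      intro ν
      by_cases hq : q ν = 0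
      · simp [hq]
      · have hmem := hq_supp hq
        exact mul_le_mul_of_nonneg_right
          (Real.exp_le_exp.mpr (neg_le_of_abs_le (hEbound ν hmem) |>.trans_eq rfl))
          (hq_nonneg ν)
    have hhigh : ∀ ν, Real.exp (E ν) * q ν ≤ Real.exp (a + b * |x|) * q ν := by
      intro ν
      by_cases hq : q ν = 0
      · simp [hq]
      · have hmem := hq_supp hq
        exact mul_le_mul_of_nonneg_right
          (Real.exp_le_exp.mpr (le_of_abs_le (hEbound ν hmem))) (hq_nonneg ν)
    have hmeas : Measurable fun ν => Real.exp (E ν) * q ν := by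
      apply Measurable.mul _ hq_meas
      apply Real.measurable_exp.comp
      fun_prop
    have hint : Integrable fun ν => Real.exp (E ν) * q ν := by
      apply Integrable.mono (hq_int.const_mul (Real.exp (a + b * |x|)))
        hmeas.aestronglyMeasurable
      filter_upwards with ν
      rw [Real.norm_eq_abs, Real.norm_eq_abs,
        abs_of_nonneg (mul_nonneg (Real.exp_pos _).le (hq_nonneg ν)),
        abs_of_nonneg (mul_nonneg (Real.exp_pos _).le (hq_nonneg ν))]
      exact hhigh ν
    have hHeq : Hfun q α x = ∫ ν, Real.exp (E ν) * q ν := rfl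
    have hHlo : Real.exp (-(a + b * |x|)) ≤ Hfun q α x := by
      rw [hHeq]
      calc Real.exp (-(a + b * |x|)) = ∫ ν, Real.exp (-(a + b * |x|)) * q ν := by
            rw [integral_const_mul, hq_one, mul_one]
        _ ≤ ∫ ν, Real.exp (E ν) * q ν :=
            integral_mono (hq_int.const_mul _) hint hlow
    have hHhi : Hfun q α x ≤ Real.exp (a + b * |x|) := by
      rw [hHeq]
      calc ∫ ν, Real.exp (E ν) * q ν ≤ ∫ ν, Real.exp (a + b * |x|) * q ν :=
            integral_mono hint (hq_int.const_mul _) hhigh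
        _ = Real.exp (a + b * |x|) := by rw [integral_const_mul, hq_one, mul_one]
    have hHpos : 0 < Hfun q α x := lt_of_lt_of_le (Real.exp_pos _) hHlo
    rw [abs_le]
    constructor
    · have := Real.log_le_log (Real.exp_pos _) hHlo
      rwa [Real.log_exp] at this
    · have := Real.log_le_log hHpos hHhi
      rwa [Real.log_exp] at this
  -- now bound the integral
  have hbound_int : Integrable fun x => a * pT x + b * (|x| * pT x) :=
    (hpT_int.const_mul a).add (hpT_mom.const_mul b)
  have hnorm : ‖-∫ x : ℝ, pT x * Real.log (Hfun q α x)‖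
      ≤ ∫ x, (a * pT x + b * (|x| * pT x)) := by
    rw [norm_neg]
    apply norm_integral_le_of_norm_le hbound_int
    filter_upwards with x
    rw [Real.norm_eq_abs, abs_mul, abs_of_nonneg (hpT_nonneg x)]
    calc pT x * |Real.log (Hfun q α x)| ≤ pT x * (a + b * |x|) :=
          mul_le_mul_of_nonneg_left (key x) (hpT_nonneg x)
      _ = a * pT x + b * (|x| * pT x) := by ring
  calc ‖-∫ x : ℝ, pT x * Real.log (Hfun q α x)‖
      ≤ ∫ x, (a * pT x + b * (|x| * pT x)) := hnorm
    _ = g α := by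
        rw [integral_add (hpT_int.const_mul a) (hpT_mom.const_mul b),
          integral_const_mul, integral_const_mul, hpT_one, mul_one, ← hM, hgdef,
          hadef, hbdef]
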